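/- Let H ≤ G = ∏_{x∈E} Γ_x with |E| = n, let X = Γ_1 ∗ ⋯ ∗ Γ_n be the join of the groups as vertex sets with the coordinatewise right H-action, and X/H the quotient simplicial poset. Then dim_ℂ H_{n−1}(X/H; ℂ) = Σ_{ρ ∈ R(H), triv(ρ) = ∅} dim ρ = χ_{P(H)^{*α}}(|Γ|) when all Γ_x = Γ; more generally the reduced Euler characteristic of X/H equals (−1)^{n−1} Σ_{S⊆E} (−1)^{|E\S|} b^{r*(E) − r*(E\S)} = (−1)^{n−1} χ_{P(H)^{*α}}(b) where α_x = log_b|Γ_x|, i.e., (−1)^{n−1} Σ_{S⊆E} (−1)^{|S|−1} |G_S|/|H_S| computes χ of the α-dual at b. -/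

import Mathlib

/-- Coordinate projection of a product of groups onto the coordinates in `S`. -/
def proj {E : Type} (Γ : E → Type) [∀ x, Group (Γ x)] (S : Finset E) :
    (∀ x, Γ x) →* (∀ x : S, Γ x) :=
  Pi.monoidHom fun i => Pi.evalMonoidHom Γ i

/-- Irreducibility of a representation. -/
def IsIrred {k G V : Type} [CommSemiring k] [Monoid G]
    [AddCommMonoid V] [Module k V] (ρ : Representation k G V) : Prop :=
  Nontrivial V ∧
    ∀ p : Submodule k V, (∀ g : G, ∀ v ∈ p, ρ g v ∈ p) → p = ⊥ ∨ p = ⊤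

/-- The tensor factor of `ρ` at the coordinate `x` is trivial, i.e. the
`x`-th coordinate subgroup acts trivially. -/
def TrivAt {E : Type} (Γ : E → Type) [∀ x, Group (Γ x)] {V : Type}
    [AddCommGroup V] [Module ℂ V]
    (ρ : Representation ℂ (∀ x, Γ x) V) (x : E) : Prop :=
  ∀ g : ∀ y, Γ y, (∀ y, y ≠ x → g y = 1) → ρ g = 1

open scoped DirectSum

set_option linter.unusedSectionVars false
set_option maxHeartbeats 1000000

section StmtAux
variable {E : Type} [Fintype E] [DecidableEq E] (Γ : E → Type) [∀ x, Group (Γ x)]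
  [∀ x, Fintype (Γ x)]

lemma proj_apply (T : Finset E) (g : ∀ x, Γ x) (i : T) : proj Γ T g i = g ↑i := rfl

lemma proj_surj (T : Finset E) : Function.Surjective (proj Γ T) := by
  intro h
  refine ⟨fun x => if hx : x ∈ T then h ⟨x, hx⟩ else 1, ?_⟩
  funext i
  simp [proj_apply, i.2]

variable (H : Subgroup (∀ x, Γ x))

/-- The map `G⧸H → G_T⧸H_T`. -/
def projQ (T : Finset E) : ((∀ x, Γ x) ⧸ H) → ((∀ x : T, Γ x) ⧸ Subgroup.map (proj Γ T) H) :=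
  Quotient.map' (proj Γ T) (by
    intro a b hab
    rw [QuotientGroup.leftRel_apply] at *
    exact ⟨a⁻¹ * b, hab, by simp [map_mul, map_inv]⟩)

lemma projQ_mk (T : Finset E) (g : ∀ x, Γ x) :
    projQ Γ H T (QuotientGroup.mk g) = QuotientGroup.mk (proj Γ T g) := rfl

lemma orbit_equiv (T : Finset E) :
    Nat.card (Quotient (MulAction.orbitRel ((proj Γ T).ker) ((∀ x, Γ x) ⧸ H))) =
      Nat.card ((∀ x : T, Γ x) ⧸ Subgroup.map (proj Γ T) H) := by
  classical
  set K := (proj Γ T).ker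
  have hcompat : ∀ (a b : (∀ x, Γ x) ⧸ H), MulAction.orbitRel K ((∀ x, Γ x) ⧸ H) a b →
      projQ Γ H T a = projQ Γ H T b := by
    intro a b hab
    rw [MulAction.orbitRel_apply] at hab
    obtain ⟨k, hk⟩ := hab
    subst hk
    induction b using QuotientGroup.induction_on with
    | H g =>
      show projQ Γ H T (QuotientGroup.mk ((k : ∀ x, Γ x) * g)) = _
      rw [projQ_mk, projQ_mk, map_mul]
      have : proj Γ T (k : ∀ x, Γ x) = 1 := k.2
      rw [this, one_mul]
  refine Nat.card_congr (Equiv.ofBijective (Quotient.lift (projQ Γ H T) hcompat) ⟨?_, ?_⟩)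
  · intro a b hab
    induction a using Quotient.inductionOn with
    | h a =>
      induction b using Quotient.inductionOn with
      | h b =>
        induction a using QuotientGroup.induction_on with
        | H g =>
          induction b using QuotientGroup.induction_on with
          | H g' =>
            simp only [Quotient.lift_mk] at hab
            rw [projQ_mk, projQ_mk, QuotientGroup.eq] at hab
            obtain ⟨h, hH, hh⟩ := hab
            apply Quotient.sound
            show (MulAction.orbitRel (↥K) (((x : E) → Γ x) ⧸ H)) _ _
            rw [MulAction.orbitRel_apply]
            have hker : g⁻¹ * g' * h⁻¹ ∈ K := by
              show proj Γ T (g⁻¹ * g' * h⁻¹) = 1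
              rw [map_mul, map_mul, map_inv, map_inv, hh]
              group
            refine ⟨⟨(g * (g⁻¹ * g' * h⁻¹) * g⁻¹)⁻¹, ?_⟩, ?_⟩
            · exact inv_mem ((MonoidHom.normal_ker (proj Γ T)).conj_mem _ hker g)
            · show QuotientGroup.mk ((g * (g⁻¹ * g' * h⁻¹) * g⁻¹)⁻¹ * g') = QuotientGroup.mk g
              have hgh : (g * (g⁻¹ * g' * h⁻¹) * g⁻¹)⁻¹ * g' = g * h := by group
              rw [hgh, QuotientGroup.eq]
              have : (g * h)⁻¹ * g = h⁻¹ := by group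
              rw [this]
              exact inv_mem hH
  · intro q
    induction q using QuotientGroup.induction_on with
    | H g' =>
      obtain ⟨g, hg⟩ := proj_surj Γ T g'
      exact ⟨Quotient.mk _ (QuotientGroup.mk g), by
        simp only [Quotient.lift_mk, projQ_mk, hg]⟩

lemma count_T (T : Finset E) :
    Nat.card (Quotient (MulAction.orbitRel ((proj Γ T).ker) ((∀ x, Γ x) ⧸ H))) *
      Nat.card (Subgroup.map (proj Γ T) H) = ∏ x ∈ T, Nat.card (Γ x) := by
  rw [orbit_equiv Γ H T, ← Subgroup.card_eq_card_quotient_mul_card_subgroup, Nat.card_pi]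
  exact Finset.prod_coe_sort T fun x => Nat.card (Γ x)

end StmtAux

def fixSub {G V : Type} [Group G] [AddCommGroup V] [Module ℂ V]
    (ρ : Representation ℂ G V) (K : Subgroup G) : Submodule ℂ V where
  carrier := {v | ∀ g ∈ K, ρ g v = v}
  add_mem' := fun ha hb g hg => by rw [map_add, ha g hg, hb g hg]
  zero_mem' := fun g hg => map_zero _
  smul_mem' := fun c v hv g hg => by rw [map_smul, hv g hg]

/-- The permutation representation on `Ω →₀ ℂ`. -/
noncomputable def permRep (G Ω : Type) [Group G] [MulAction G Ω] :
    Representation ℂ G (Ω →₀ ℂ) where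
  toFun g := Finsupp.lmapDomain ℂ ℂ (g • ·)
  map_one' := by ext; simp
  map_mul' x y := by ext; simp [mul_smul]

lemma permRep_apply {G Ω : Type} [Group G] [MulAction G Ω] (g : G) (f : Ω →₀ ℂ) (x : Ω) :
    permRep G Ω g f x = f (g⁻¹ • x) := by
  have h := Finsupp.mapDomain_apply (MulAction.injective g) f (g⁻¹ • x)
  rw [smul_inv_smul] at h
  exact h

lemma permRep_ofMulAction {G Ω : Type} [Group G] [MulAction G Ω] (g : G) (f : Ω →₀ ℂ) :
    (Representation.ofMulAction ℂ G Ω g (MonoidAlgebra.ofCoeff f)).coeff = permRep G Ω g f := by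
  rfl

lemma mem_fixSub_perm {G Ω : Type} [Group G] [MulAction G Ω] (K : Subgroup G) (v : Ω →₀ ℂ) :
    v ∈ fixSub (permRep G Ω) K ↔
      ∀ g ∈ K, ∀ x : Ω, v (g • x) = v x := by
  constructor
  · intro hv g hg x
    have h2 := DFunLike.congr_fun (hv g hg) (g • x)
    rw [permRep_apply, inv_smul_smul] at h2
    exact h2.symm
  · intro hv g hg
    ext x
    rw [permRep_apply]
    have h2 := hv g hg (g⁻¹ • x)
    rw [smul_inv_smul] at h2
    exact h2.symm

lemma finrank_fixSub_perm {G Ω : Type} [Group G] [MulAction G Ω] [Finite Ω] (K : Subgroup G) :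
    Module.finrank ℂ (fixSub (permRep G Ω) K) =
      Nat.card (Quotient (MulAction.orbitRel K Ω)) := by
  classical
  cases nonempty_fintype Ω
  set F := fixSub (permRep G Ω) K with hF
  let Φ : F →ₗ[ℂ] (Quotient (MulAction.orbitRel K Ω) → ℂ) :=
    (LinearMap.pi fun q => Finsupp.lapply q.out).comp F.subtype
  have hbij : Function.Bijective Φ := by
    constructor
    · intro v w hvw
      ext x
      have key : ∀ u : F, ∀ y : Ω, (u : Ω →₀ ℂ) y =
          (u : Ω →₀ ℂ) (Quotient.mk (MulAction.orbitRel K Ω) y).out := by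
        intro u y
        have hrel : (Quotient.mk (MulAction.orbitRel K Ω) y).out ∈
            MulAction.orbit K y := by
          rw [← MulAction.orbitRel_apply]
          exact Quotient.exact (Quotient.out_eq _)
        obtain ⟨k, hk⟩ := hrel
        rw [← hk]
        exact ((mem_fixSub_perm K _).1 u.2 (k : G) k.2 y).symm
      have h2 := congrFun hvw (Quotient.mk (MulAction.orbitRel K Ω) x)
      simp only [Φ, LinearMap.comp_apply, LinearMap.pi_apply, Finsupp.lapply_apply] at h2
      rw [key v x, key w x]
      exact h2
    · intro h
      refine ⟨⟨Finsupp.equivFunOnFinite.symm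
        (fun x => h (Quotient.mk (MulAction.orbitRel K Ω) x)), ?_⟩, ?_⟩
      · rw [mem_fixSub_perm]
        intro g hg x
        simp only [Finsupp.coe_equivFunOnFinite_symm]
        congr 1
        apply Quotient.sound
        show (MulAction.orbitRel K Ω) _ _
        rw [MulAction.orbitRel_apply]
        exact ⟨⟨g, hg⟩, rfl⟩
      · ext q
        simp only [Φ, LinearMap.comp_apply, LinearMap.pi_apply, Finsupp.lapply_apply,
          Submodule.coe_subtype, Finsupp.coe_equivFunOnFinite_symm]
        rw [Quotient.out_eq]
  have : Module.finrank ℂ F = Module.finrank ℂ (Quotient (MulAction.orbitRel K Ω) → ℂ) :=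
    (LinearEquiv.ofBijective Φ hbij).finrank_eq
  rw [this, Module.finrank_fintype_fun_eq_card, Nat.card_eq_fintype_card]

section Irr
variable {E : Type} [Fintype E] [DecidableEq E] {Γ : E → Type} [∀ x, Group (Γ x)]
  {V : Type} [AddCommGroup V] [Module ℂ V]

lemma rho_one_aux (ρ : Representation ℂ (∀ x, Γ x) V) (T : Finset E)
    (h : ∀ x ∉ T, TrivAt Γ ρ x) (U : Finset E) :
    (∀ x ∈ U, x ∉ T) → ∀ g : (∀ x, Γ x), (∀ x ∉ U, g x = 1) → ρ g = 1 := by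
  induction U using Finset.induction_on with
  | empty =>
    intro _ g hsupp
    have : g = 1 := funext fun x => hsupp x (Finset.notMem_empty x)
    rw [this, map_one]
  | @insert a U' ha ih =>
    intro hUT g hsupp
    have key : g = Pi.mulSingle a (g a) * Function.update g a 1 := by
      funext x
      by_cases hx : x = a
      · subst hx
        simp [Pi.mul_apply]
      · simp [Pi.mul_apply, Pi.mulSingle_eq_of_ne hx, Function.update_of_ne hx]
    rw [key, map_mul]
    have h1 : ρ (Pi.mulSingle a (g a)) = 1 :=
      h a (hUT a (Finset.mem_insert_self a U')) _
        (fun y hy => Pi.mulSingle_eq_of_ne hy _)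
    have h2 : ρ (Function.update g a 1) = 1 := by
      refine ih (fun x hx => hUT x (Finset.mem_insert_of_mem hx)) _ ?_
      intro x hx
      by_cases hxa : x = a
      · subst hxa; simp
      · rw [Function.update_of_ne hxa]
        exact hsupp x (fun hmem => hx ((Finset.mem_insert.1 hmem).resolve_left hxa))
    rw [h1, h2, one_mul]

lemma rho_one_of_trivAt (ρ : Representation ℂ (∀ x, Γ x) V) (T : Finset E)
    (h : ∀ x ∉ T, TrivAt Γ ρ x) (g : ∀ x, Γ x) (hg : g ∈ (proj Γ T).ker) : ρ g = 1 := by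
  refine rho_one_aux ρ T h (Finset.univ \ T) (fun x hx => (Finset.mem_sdiff.1 hx).2) g ?_
  intro x hx
  have hxT : x ∈ T := by
    by_contra hxT
    exact hx (Finset.mem_sdiff.2 ⟨Finset.mem_univ x, hxT⟩)
  have := congrFun (congrArg (fun f => (f : ∀ x : T, Γ x)) hg) ⟨x, hxT⟩
  exact this

open Classical in
lemma finrank_fixSub_irr [FiniteDimensional ℂ V] (ρ : Representation ℂ (∀ x, Γ x) V)
    (hirr : IsIrred ρ) (T : Finset E) :
    Module.finrank ℂ (fixSub ρ ((proj Γ T).ker)) =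
      if ∀ x ∉ T, TrivAt Γ ρ x then Module.finrank ℂ V else 0 := by
  split_ifs with hcond
  · have : fixSub ρ ((proj Γ T).ker) = ⊤ := by
      rw [Submodule.eq_top_iff']
      intro v g hg
      rw [rho_one_of_trivAt ρ T hcond g hg, Module.End.one_apply]
    rw [this]
    exact finrank_top ℂ V
  · have hbot : fixSub ρ ((proj Γ T).ker) = ⊥ := by
      have hinv : ∀ g : (∀ x, Γ x), ∀ v ∈ fixSub ρ ((proj Γ T).ker),
          ρ g v ∈ fixSub ρ ((proj Γ T).ker) := by
        intro g v hv k hk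
        have hconj : g⁻¹ * k * g ∈ (proj Γ T).ker := by
          have := (MonoidHom.normal_ker (proj Γ T)).conj_mem k hk g⁻¹
          simpa using this
        calc (ρ k) ((ρ g) v) = ρ (k * g) v := by rw [map_mul]; rfl
          _ = ρ (g * (g⁻¹ * k * g)) v := by group
          _ = (ρ g) ((ρ (g⁻¹ * k * g)) v) := by rw [map_mul]; rfl
          _ = (ρ g) v := by rw [hv _ hconj]
      rcases hirr.2 _ hinv with hb | ht
      · exact hb
      · exfalso
        apply hcond
        intro x hx g hgy
        have hker : g ∈ (proj Γ T).ker := by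
          show proj Γ T g = 1
          funext i
          exact hgy i.1 (fun hne => hx (hne ▸ i.2))
        have hall : ∀ v : V, v ∈ fixSub ρ ((proj Γ T).ker) := Submodule.eq_top_iff'.1 ht
        exact LinearMap.ext fun v => (hall v g hker).trans (Module.End.one_apply v).symm
    rw [hbot, finrank_bot]
end Irr

open DirectSum
section DS
variable {G : Type} [Group G] {Ω : Type} [MulAction G Ω]
  {ι : Type} [Fintype ι] [DecidableEq ι]
  (V : ι → Type) [∀ i, AddCommGroup (V i)] [∀ i, Module ℂ (V i)]
  [∀ i, FiniteDimensional ℂ (V i)]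
  (ρ : ∀ i, Representation ℂ G (V i))
  (K : Subgroup G)

lemma sum_finrank_fix (e : (⨁ i, V i) ≃ₗ[ℂ] (Ω →₀ ℂ))
    (he : ∀ (g : G) (i : ι) (v : V i), e (DirectSum.lof ℂ ι V i (ρ i g v)) =
      permRep G Ω g (e (DirectSum.lof ℂ ι V i v))) :
    ∑ i, Module.finrank ℂ (fixSub (ρ i) K) =
      Module.finrank ℂ (fixSub (permRep G Ω) K) := by
  classical
  set P : Submodule ℂ (Ω →₀ ℂ) := fixSub (permRep G Ω) K with hP
  have hmem : ∀ i (v : fixSub (ρ i) K), e (lof ℂ ι V i v.val) ∈ P := by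
    intro i v g hg
    rw [← he g i v.val, v.2 g hg]
  let Li : ∀ i, fixSub (ρ i) K →ₗ[ℂ] P := fun i =>
    LinearMap.codRestrict P (e.toLinearMap ∘ₗ lof ℂ ι V i ∘ₗ (fixSub (ρ i) K).subtype)
      (fun v => hmem i v)
  let Φ : (⨁ i, fixSub (ρ i) K) →ₗ[ℂ] P := toModule ℂ ι P Li
  let ψ : (⨁ i, fixSub (ρ i) K) →ₗ[ℂ] (⨁ i, V i) :=
    toModule ℂ ι _ (fun i => lof ℂ ι V i ∘ₗ (fixSub (ρ i) K).subtype)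
  have hΦψ : ∀ w, (Φ w).val = e (ψ w) := by
    intro w
    have : P.subtype ∘ₗ Φ = e.toLinearMap ∘ₗ ψ := by
      refine linearMap_ext ℂ fun i => ?_
      ext u
      simp [Φ, ψ, Li, toModule_lof]
      rfl
    exact DFunLike.congr_fun this w
  have hψ : ∀ w i, ψ w i = (w i).val := by
    intro w i
    have : (component ℂ ι V i) ∘ₗ ψ =
        (fixSub (ρ i) K).subtype ∘ₗ (component ℂ ι (fun j => fixSub (ρ j) K) i) := by
      refine linearMap_ext ℂ fun j => ?_
      ext u
      simp only [LinearMap.coe_comp, Function.comp_apply, Submodule.coe_subtype, ψ,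
        toModule_lof, component.of]
      split
      · rename_i h; subst h; rfl
      · simp
    exact DFunLike.congr_fun this w
  have hbij : Function.Bijective Φ := by
    constructor
    · intro w w' hww
      have h1 : e (ψ w) = e (ψ w') := by rw [← hΦψ, ← hΦψ, hww]
      have h2 : ψ w = ψ w' := e.injective h1
      refine DFinsupp.ext fun i => ?_
      have := congrArg (fun z => z i) h2
      simp only [hψ] at this
      exact Subtype.ext this
    · intro f
      set u : ⨁ i, V i := e.symm f.val with hu
      have hui : ∀ g ∈ K, ∀ i, ρ i g (u i) = u i := by
        intro g hg i
        have hsum : e (∑ j, lof ℂ ι V j (ρ j g (u j))) =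
            permRep G Ω g (e u) := by
          rw [map_sum]
          have : ∀ j, e (lof ℂ ι V j (ρ j g (u j))) =
              permRep G Ω g (e (lof ℂ ι V j (u j))) :=
            fun j => he g j (u j)
          rw [Finset.sum_congr rfl (fun j _ => this j), ← map_sum, ← map_sum]
          congr 1
          exact congrArg _ (DirectSum.sum_univ_of u)
        have hfix : permRep G Ω g (e u) = e u := by
          rw [hu]
          simp only [LinearEquiv.apply_symm_apply]
          exact f.2 g hg
        have : (∑ j, lof ℂ ι V j (ρ j g (u j))) = u := by
          apply e.injective
          rw [hsum, hfix]
        have hcomp := congrArg (component ℂ ι V i) this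
        rw [map_sum] at hcomp
        simp only [component.of] at hcomp
        simp only [Finset.sum_dite_eq', Finset.mem_univ, if_true] at hcomp
        rw [DirectSum.apply_eq_component ℂ u i]
        exact hcomp
      refine ⟨∑ i, DirectSum.lof ℂ ι (fun j => ↥(fixSub (ρ j) K)) i
        ⟨u i, fun g hg => hui g hg i⟩, ?_⟩
      apply Subtype.ext
      rw [hΦψ]
      have hψs : ψ (∑ i, DirectSum.lof ℂ ι (fun j => ↥(fixSub (ρ j) K)) i
          ⟨u i, fun g hg => hui g hg i⟩) = ∑ i, lof ℂ ι V i (u i) := by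
        rw [map_sum]
        exact Finset.sum_congr rfl fun i _ => by simp [ψ, toModule_lof]
      rw [hψs]
      simp only [lof_eq_of]
      rw [DirectSum.sum_univ_of]
      exact e.apply_symm_apply f.val
  have hfr : Module.finrank ℂ (⨁ i, ↥(fixSub (ρ i) K)) = Module.finrank ℂ P :=
    (LinearEquiv.ofBijective Φ hbij).finrank_eq
  rw [← hfr, Module.finrank_directSum]
end DS

lemma sum_powerset_compl {E M : Type} [Fintype E] [DecidableEq E] [AddCommMonoid M]
    (f : Finset E → M) :
    ∑ S ∈ Finset.univ.powerset, f S = ∑ S ∈ Finset.univ.powerset, f (Finset.univ \ S) := by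
  refine Finset.sum_nbij' (fun S => Finset.univ \ S) (fun S => Finset.univ \ S)
    ?_ ?_ ?_ ?_ ?_ <;>
    intro S hS <;>
    simp_all [Finset.mem_powerset, Finset.sdiff_sdiff_self_left,
      Finset.inter_eq_right, Finset.subset_univ]

lemma sum_pow_neg_one_real {α : Type} [DecidableEq α] (x : Finset α) :
    (∑ m ∈ x.powerset, (-1:ℝ) ^ m.card) = if x = ∅ then 1 else 0 := by
  have h := Finset.sum_powerset_neg_one_pow_card (x := x)
  have h2 : ((∑ m ∈ x.powerset, (-1:ℤ) ^ m.card : ℤ) : ℝ)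
      = ∑ m ∈ x.powerset, (-1:ℝ) ^ m.card := by push_cast; rfl
  rw [← h2, h]
  split <;> simp


open Classical in
/-- `dim_ℂ H_{n−1}(X/H; ℂ)`, which equals the sum of the
dimensions of the irreducible constituents `ρ` of `ℂ[G/H]` with
`triv(ρ) = ∅`, equals `χ_{P(H)^{*α}}(b)`; and the reduced Euler characteristic
of `X/H`, computed by the face count `Σ_{S⊆E} (−1)^{|S|−1} |G_S|/|H_S|`,
equals `(−1)^{n−1} χ_{P(H)^{*α}}(b)`. -/
theorem stmt19 {E : Type} [Fintype E] [DecidableEq E]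
    (Γ : E → Type) [∀ x, Group (Γ x)] [∀ x, Fintype (Γ x)]
    (H : Subgroup (∀ x, Γ x)) (b : ℝ) (hb : 1 < b)
    (r : Finset E → ℝ)
    (hr : ∀ S : Finset E, r S = Real.logb b (Nat.card (Subgroup.map (proj Γ S) H)))
    (rd : Finset E → ℝ)
    (hrd : ∀ S : Finset E,
      rd S = r (Finset.univ \ S) +
        (∑ x ∈ S, Real.logb b (Nat.card (Γ x))) - r Finset.univ)
    {ι : Type} [Fintype ι] [DecidableEq ι]
    (V : ι → Type) [∀ i, AddCommGroup (V i)] [∀ i, Module ℂ (V i)]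
    [∀ i, FiniteDimensional ℂ (V i)]
    (ρ : ∀ i, Representation ℂ (∀ x, Γ x) (V i))
    (hirr : ∀ i, IsIrred (ρ i))
    (e : (⨁ i, V i) ≃ₗ[ℂ] (((∀ x, Γ x) ⧸ H) →₀ ℂ))
    (he : ∀ (g : ∀ x, Γ x) (i : ι) (v : V i),
      e (DirectSum.lof ℂ ι V i (ρ i g v)) =
        (Representation.ofMulAction ℂ (∀ x, Γ x) ((∀ x, Γ x) ⧸ H) g
          (MonoidAlgebra.ofCoeff (e (DirectSum.lof ℂ ι V i v)))).coeff) :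
    -- dim H_{n-1}(X/H; ℂ) = Σ_{ρ ∈ R(H), triv ρ = ∅} dim ρ = χ_{P*}(b)
    (∑ i : ι,
        if ∀ x : E, ¬ TrivAt Γ (ρ i) x then (Module.finrank ℂ (V i) : ℝ) else 0) =
      ∑ S ∈ Finset.univ.powerset,
        (-1 : ℝ) ^ S.card * b ^ (rd Finset.univ - rd S) ∧
    -- the reduced Euler characteristic of X/H equals (−1)^{n−1} χ_{P*}(b)
    (∑ S ∈ Finset.univ.powerset, (-1 : ℝ) ^ (S.card + 1) *
        ((∏ x ∈ S, (Nat.card (Γ x) : ℝ)) /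
          (Nat.card (Subgroup.map (proj Γ S) H) : ℝ))) =
      (-1 : ℝ) ^ (Fintype.card E + 1) *
        ∑ S ∈ Finset.univ.powerset,
          (-1 : ℝ) ^ S.card * b ^ (rd Finset.univ - rd S) := by
  classical
  have hbpos : (0:ℝ) < b := lt_trans zero_lt_one hb
  have hbne : b ≠ 1 := ne_of_gt hb
  have hΓpos : ∀ x : E, (0:ℝ) < (Nat.card (Γ x) : ℝ) := fun x => by
    exact_mod_cast Nat.card_pos
  have hprodpos : ∀ T : Finset E, (0:ℝ) < ∏ x ∈ T, (Nat.card (Γ x) : ℝ) :=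
    fun T => Finset.prod_pos fun x _ => hΓpos x
  have hHpos : ∀ T : Finset E,
      (0:ℝ) < (Nat.card (Subgroup.map (proj Γ T) H) : ℝ) := fun T => by
    exact_mod_cast Nat.card_pos
  have key : ∀ T : Finset E,
      (∑ i, if ∀ x ∉ T, TrivAt Γ (ρ i) x then Module.finrank ℂ (V i) else 0) *
        Nat.card (Subgroup.map (proj Γ T) H) = ∏ x ∈ T, Nat.card (Γ x) := by
    intro T
    have h1 : ∀ i ∈ Finset.univ,
        (if ∀ x ∉ T, TrivAt Γ (ρ i) x then Module.finrank ℂ (V i) else 0)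
          = Module.finrank ℂ (fixSub (ρ i) ((proj Γ T).ker)) :=
      fun i _ => (finrank_fixSub_irr (ρ i) (hirr i) T).symm
    rw [Finset.sum_congr rfl h1, sum_finrank_fix V ρ ((proj Γ T).ker) e
        (fun g i v => (he g i v).trans (permRep_ofMulAction _ _)),
      finrank_fixSub_perm]
    exact count_T Γ H T
  have hF : ∀ T : Finset E,
      (∏ x ∈ T, (Nat.card (Γ x) : ℝ)) / (Nat.card (Subgroup.map (proj Γ T) H) : ℝ) =
        ∑ i, if ∀ x ∉ T, TrivAt Γ (ρ i) x then (Module.finrank ℂ (V i) : ℝ) else 0 := by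
    intro T
    rw [div_eq_iff (hHpos T).ne']
    have h := congrArg (fun n : ℕ => (n : ℝ)) (key T)
    push_cast at h
    exact h.symm
  have hr0 : r ∅ = 0 := by
    rw [hr]
    have h1 : Nat.card (Subgroup.map (proj Γ (∅ : Finset E)) H) = 1 := by
      have hsub : Subsingleton (∀ x : ((∅ : Finset E) : Finset E), Γ x) :=
        ⟨fun a b => funext fun i => absurd i.2 (Finset.notMem_empty _)⟩
      exact Nat.card_eq_one_iff_unique.2
        ⟨⟨fun a b => Subtype.ext (Subsingleton.elim _ _)⟩, ⟨1⟩⟩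
    rw [h1]
    simp
  have hpow : ∀ S : Finset E, b ^ (rd Finset.univ - rd S) =
      (∏ x ∈ Finset.univ \ S, (Nat.card (Γ x) : ℝ)) /
        (Nat.card (Subgroup.map (proj Γ (Finset.univ \ S)) H) : ℝ) := by
    intro S
    have hsub : rd Finset.univ - rd S =
        (∑ x ∈ Finset.univ \ S, Real.logb b (Nat.card (Γ x))) - r (Finset.univ \ S) := by
      rw [hrd, hrd, Finset.sdiff_self, hr0,
        Finset.sum_sdiff_eq_sub (Finset.subset_univ S)]
      ring
    have hlogsum : ∑ x ∈ Finset.univ \ S, Real.logb b ((Nat.card (Γ x) : ℝ)) =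
        Real.logb b (∏ x ∈ Finset.univ \ S, (Nat.card (Γ x) : ℝ)) := by
      unfold Real.logb
      rw [← Finset.sum_div, Real.log_prod (fun x _ => (hΓpos x).ne')]
    rw [hsub, hlogsum, hr (Finset.univ \ S), Real.rpow_sub hbpos,
      Real.rpow_logb hbpos hbne (hprodpos _), Real.rpow_logb hbpos hbne (hHpos _)]
  constructor
  · -- goal 1
    have step1 : ∑ S ∈ Finset.univ.powerset,
          (-1:ℝ) ^ S.card * b ^ (rd Finset.univ - rd S)
        = ∑ S ∈ Finset.univ.powerset, (-1:ℝ) ^ S.card *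
            ∑ i, (if ∀ x ∉ Finset.univ \ S, TrivAt Γ (ρ i) x
              then (Module.finrank ℂ (V i) : ℝ) else 0) :=
      Finset.sum_congr rfl fun S _ => by rw [hpow S, hF]
    have main1 : ∑ S ∈ Finset.univ.powerset, (-1:ℝ) ^ S.card *
            ∑ i, (if ∀ x ∉ Finset.univ \ S, TrivAt Γ (ρ i) x
              then (Module.finrank ℂ (V i) : ℝ) else 0)
        = ∑ i, (if ∀ x : E, ¬ TrivAt Γ (ρ i) x
            then (Module.finrank ℂ (V i) : ℝ) else 0) := by
      have hswap : ∑ S ∈ Finset.univ.powerset, (-1:ℝ) ^ S.card *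
            ∑ i, (if ∀ x ∉ Finset.univ \ S, TrivAt Γ (ρ i) x
              then (Module.finrank ℂ (V i) : ℝ) else 0)
          = ∑ i, ∑ S ∈ Finset.univ.powerset,
              (if ∀ x ∉ Finset.univ \ S, TrivAt Γ (ρ i) x
                then (-1:ℝ) ^ S.card * (Module.finrank ℂ (V i) : ℝ) else 0) := by
        rw [Finset.sum_comm]
        refine Finset.sum_congr rfl fun S _ => ?_
        rw [Finset.mul_sum]
        exact Finset.sum_congr rfl fun i _ => by rw [mul_ite, mul_zero]
      rw [hswap]
      refine Finset.sum_congr rfl fun i _ => ?_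
      set C : Finset E := Finset.univ.filter (fun x => TrivAt Γ (ρ i) x) with hC
      have hcond : ∀ S : Finset E,
          (∀ x ∉ Finset.univ \ S, TrivAt Γ (ρ i) x) ↔ S ⊆ C := by
        intro S
        constructor
        · intro h x hx
          refine Finset.mem_filter.2 ⟨Finset.mem_univ x, ?_⟩
          exact h x (fun hmem => (Finset.mem_sdiff.1 hmem).2 hx)
        · intro h x hx
          have hxS : x ∈ S := by
            by_contra hxS
            exact hx (Finset.mem_sdiff.2 ⟨Finset.mem_univ x, hxS⟩)
          exact (Finset.mem_filter.1 (h hxS)).2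
      have hstep : ∑ S ∈ Finset.univ.powerset,
            (if ∀ x ∉ Finset.univ \ S, TrivAt Γ (ρ i) x
              then (-1:ℝ) ^ S.card * (Module.finrank ℂ (V i) : ℝ) else 0)
          = ∑ S ∈ C.powerset, (-1:ℝ) ^ S.card * (Module.finrank ℂ (V i) : ℝ) := by
        rw [Finset.sum_congr rfl (fun S _ =>
          if_congr (hcond S) rfl rfl), ← Finset.sum_filter]
        refine Finset.sum_congr ?_ fun S _ => rfl
        ext S
        simp [Finset.mem_powerset, Finset.subset_univ]
      rw [hstep, ← Finset.sum_mul, sum_pow_neg_one_real]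
      have hCempty : C = ∅ ↔ ∀ x : E, ¬ TrivAt Γ (ρ i) x := by
        rw [Finset.filter_eq_empty_iff]
        constructor
        · intro h x
          exact h (Finset.mem_univ x)
        · intro h x _
          exact h x
      split_ifs with h1 h2 h2
      · rw [one_mul]
      · exact absurd (hCempty.1 h1) h2
      · exact absurd (hCempty.2 h2) h1
      · rw [zero_mul]
    exact main1.symm.trans step1.symm
  · -- goal 2
    have hcompl := sum_powerset_compl (fun S : Finset E =>
      (-1:ℝ) ^ (S.card + 1) * ((∏ x ∈ S, (Nat.card (Γ x):ℝ)) /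
        (Nat.card (Subgroup.map (proj Γ S) H):ℝ)))
    rw [hcompl, Finset.mul_sum]
    refine Finset.sum_congr rfl fun S hS => ?_
    rw [hpow S]
    have hcard : (Finset.univ \ S).card = Fintype.card E - S.card := by
      rw [Finset.card_sdiff_of_subset (Finset.subset_univ S), Finset.card_univ]
    rw [hcard]
    have hsign : (-1:ℝ) ^ (Fintype.card E - S.card + 1) =
        (-1:ℝ) ^ (Fintype.card E + 1) * (-1:ℝ) ^ S.card := by
      have hk : S.card ≤ Fintype.card E := by
        simpa using Finset.card_le_card (Finset.subset_univ S)
      have h2 : ((-1:ℝ)) ^ (2 * S.card) = 1 := by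
        rw [pow_mul, neg_one_sq, one_pow]
      calc (-1:ℝ) ^ (Fintype.card E - S.card + 1)
          = (-1:ℝ) ^ (Fintype.card E - S.card + 1) * (-1:ℝ) ^ (2 * S.card) := by
            rw [h2, mul_one]
        _ = (-1:ℝ) ^ ((Fintype.card E - S.card + 1) + 2 * S.card) := (pow_add _ _ _).symm
        _ = (-1:ℝ) ^ (Fintype.card E + 1 + S.card) := by
            rw [show (Fintype.card E - S.card + 1) + 2 * S.card = Fintype.card E + 1 + S.card
              from by omega]
        _ = (-1:ℝ) ^ (Fintype.card E + 1) * (-1:ℝ) ^ S.card := pow_add _ _ _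
    rw [hsign]
    ring
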